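/- Let α and β be two irrational real numbers in (0,1) with continued fraction expansions α = [0; a₁, a₂, …] and β = [0; b₁, b₂, …], and let pₖ/qₖ denote the convergents of β. Suppose n ≥ 1 is such that aᵢ = bᵢ for i = 1, …, n−1 but aₙ ≠ bₙ. Then |α − β| ≥ 1/(72 · qₙ² · b_{n+1} · b_{n+2}) ≥ 1/(72 · qₙ · q_{n+2}). -/

import Mathlib

def IsCFOf (α : ℝ) (a : ℕ → ℤ) : Prop :=
  ∃ x : ℕ → ℝ, x 0 = α ∧ (∀ n, a n = ⌊x n⌋) ∧ ∀ n, x (n + 1) = 1 / (x n - ⌊x n⌋)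

def IsConvergentsOf (a : ℕ → ℤ) (p q : ℕ → ℤ) : Prop :=
  p 0 = 1 ∧ p 1 = a 0 ∧ (∀ n, p (n + 2) = a (n + 1) * p (n + 1) + p n) ∧
  q 0 = 0 ∧ q 1 = 1 ∧ (∀ n, q (n + 2) = a (n + 1) * q (n + 1) + q n)

lemma cf_basics (γ : ℝ) (c : ℕ → ℤ) (hcf : IsCFOf γ c) (hirr : Irrational γ) :
    ∃ x : ℕ → ℝ, x 0 = γ ∧ (∀ k, c k = ⌊x k⌋) ∧ (∀ k, Irrational (x k)) ∧
      (∀ k, 1 < x (k + 1)) ∧ (∀ k, x (k + 1) * (x k - (c k : ℝ)) = 1) := by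
  obtain ⟨x, hx0, hfl, hrec⟩ := hcf
  have hir : ∀ k, Irrational (x k) := by
    intro k
    induction k with
    | zero => rwa [hx0]
    | succ k ih =>
      rw [hrec k, one_div]
      exact ((ih.sub_intCast _).inv)
  have hfr : ∀ k, 0 < Int.fract (x k) ∧ Int.fract (x k) < 1 := by
    intro k
    refine ⟨?_, Int.fract_lt_one _⟩
    rw [Int.fract_pos]
    exact fun hh => (hir k).ne_int ⌊x k⌋ hh
  refine ⟨x, hx0, hfl, hir, fun k => ?_, fun k => ?_⟩
  · rw [hrec k, show x k - (⌊x k⌋ : ℝ) = Int.fract (x k) from rfl,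
      one_lt_div ((hfr k).1)]
    exact (hfr k).2
  · rw [hrec k, hfl k]
    have h1 := (hfr k).1
    rw [show x k - ((⌊x k⌋ : ℤ) : ℝ) = Int.fract (x k) from rfl]
    field_simp


lemma arith_p2 (Q1 Q2 B1 B2 q3 q4 : ℝ) (hQ1 : 0 ≤ Q1) (hQ2 : 1 ≤ Q2) (hB1 : 1 ≤ B1)
    (hB2 : 1 ≤ B2) (h3 : q3 = B1 * Q2 + Q1) (h4 : q4 = B2 * q3 + Q2) :
    72 * Q2 ^ 2 * B1 * B2 ≤ 72 * Q2 * q4 := by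
  subst h3 h4
  linarith [mul_nonneg (mul_nonneg (by linarith : (0:ℝ) ≤ Q2) (by linarith : (0:ℝ) ≤ B2)) hQ1,
    sq_nonneg Q2]

lemma arith_red (D t C : ℝ) (hD : 0 < D) (h : D ≤ t * D * C) : 1 ≤ t * C := by
  have h' : D * 1 ≤ D * (t * C) := by linarith
  exact le_of_mul_le_mul_left h' hD

lemma arith_lt (X Y Q0 Q1 Q2 Bn B1 B2 An y2 : ℝ)
    (hQ0n : 0 ≤ Q0) (hQ1g : 1 ≤ Q1) (hQ01 : Q0 ≤ Q1) (hQ12 : Q1 ≤ Q2)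
    (hQ2rec : Q2 = Bn * Q1 + Q0) (hBng : 1 ≤ Bn) (hB1g : 1 ≤ B1) (hB2g : 1 ≤ B2)
    (hX1 : 1 < X) (hXhigh : X < An + 1) (hab1 : An + 1 ≤ Bn)
    (hYlow : Bn < Y) (hYhigh : Y < Bn + 1)
    (hy2high : y2 < B1 + 1) (hy2pos : 1 < y2) (hyr1 : y2 * (Y - Bn) = 1) :
    (X * Q1 + Q0) * (Y * Q1 + Q0) ≤ (Y - X) * (72 * Q2 ^ 2 * B1 * B2) := by
  have hQ1n : (0:ℝ) ≤ Q1 := by linarith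
  have hQ2g : (1 : ℝ) ≤ Q2 := by
    linarith [mul_le_mul hBng hQ1g zero_le_one (by linarith : (0:ℝ) ≤ Bn)]
  have hYBn : (0 : ℝ) < Y - Bn := by linarith
  have t1 : (1:ℝ) ≤ (Y - Bn) * (B1 + 1) := by
    linarith [hyr1, mul_nonneg hYBn.le (by linarith : (0:ℝ) ≤ B1 + 1 - y2)]
  have t2 : (Y - Bn) * (B1 + 1) ≤ (Y - X) * (B1 + 1) := by
    linarith [mul_nonneg (by linarith : (0:ℝ) ≤ Bn - X) (by linarith : (0:ℝ) ≤ B1 + 1)]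
  have h3 : (1 : ℝ) ≤ (Y - X) * (B1 + 1) := le_trans t1 t2
  have hDxQ2 : X * Q1 + Q0 ≤ Q2 := by
    linarith [mul_le_mul_of_nonneg_right (by linarith : X ≤ Bn) hQ1n]
  have hDy2 : Y * Q1 + Q0 ≤ 2 * Q2 := by
    linarith [mul_le_mul_of_nonneg_right hYhigh.le hQ1n,
      mul_le_mul_of_nonneg_right hBng hQ1n]
  have hDy0 : (0:ℝ) < Y * Q1 + Q0 := by
    linarith [mul_pos (by linarith : (0:ℝ) < Y) (by linarith : (0:ℝ) < Q1)]
  have c1 : (X * Q1 + Q0) * (Y * Q1 + Q0) ≤ Q2 * (2 * Q2) :=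
    mul_le_mul hDxQ2 hDy2 hDy0.le (by linarith)
  have c4 : 2 * (B1 + 1) ≤ 72 * B1 * B2 := by
    linarith [mul_le_mul_of_nonneg_left hB2g (by linarith : (0:ℝ) ≤ B1)]
  have c5 : (0 : ℝ) ≤ Q2 ^ 2 * (Y - X) := mul_nonneg (sq_nonneg Q2) (by linarith)
  calc (X * Q1 + Q0) * (Y * Q1 + Q0) ≤ Q2 * (2 * Q2) := c1
    _ = 2 * Q2 ^ 2 * 1 := by ring
    _ ≤ 2 * Q2 ^ 2 * ((Y - X) * (B1 + 1)) :=
        mul_le_mul_of_nonneg_left h3 (by positivity)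
    _ ≤ (Y - X) * (72 * Q2 ^ 2 * B1 * B2) := by
        linarith [mul_le_mul_of_nonneg_right c4 c5]

lemma arith_gt (X Y Q0 Q1 Q2 Bn B1 B2 An y2 y3 : ℝ)
    (hQ0n : 0 ≤ Q0) (hQ1g : 1 ≤ Q1) (hQ01 : Q0 ≤ Q1) (hQ12 : Q1 ≤ Q2)
    (hQ2rec : Q2 = Bn * Q1 + Q0) (hBng : 1 ≤ Bn) (hB1g : 1 ≤ B1) (hB2g : 1 ≤ B2)
    (hX1 : 1 < X) (hXlow : An < X) (hba1 : Bn + 1 ≤ An)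
    (hYlow : Bn < Y) (hYhigh : Y < Bn + 1) (hY1 : 1 < Y)
    (hy2high : y2 < B1 + 1) (hy2pos : 1 < y2) (hyr1 : y2 * (Y - Bn) = 1)
    (hy3high : y3 < B2 + 1) (hy3pos : 1 < y3) (hyr2 : y3 * (y2 - B1) = 1) :
    (X * Q1 + Q0) * (Y * Q1 + Q0) ≤ (X - Y) * (72 * Q2 ^ 2 * B1 * B2) := by
  have hQ1n : (0:ℝ) ≤ Q1 := by linarith
  have hQ2g : (1 : ℝ) ≤ Q2 := by
    linarith [mul_le_mul hBng hQ1g zero_le_one (by linarith : (0:ℝ) ≤ Bn)]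
  have hYX : Y < X := by linarith
  have hX0 : (0 : ℝ) < X := by linarith
  have ht : (0 : ℝ) < Bn + 1 - Y := by linarith
  have h4bb : (0:ℝ) ≤ 4 * B1 * B2 :=
    mul_nonneg (mul_nonneg (by norm_num) (by linarith)) (by linarith)
  have e1 : (Bn + 1 - Y) * y2 = y2 - 1 := by linear_combination -hyr1
  have hy2B1 : (0 : ℝ) < y2 - B1 := by
    by_contra hcon
    push_neg at hcon
    have hle : y3 * (y2 - B1) ≤ 0 := mul_nonpos_iff.mpr (Or.inl ⟨by linarith, hcon⟩)
    linarith
  have e2 : (1 : ℝ) ≤ (y2 - 1) * (2 * B2) := by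
    linarith [hyr2, mul_nonneg hy2B1.le (by linarith : (0:ℝ) ≤ 2 * B2 - y3),
      mul_nonneg (by linarith : (0:ℝ) ≤ B1 - 1) (by linarith : (0:ℝ) ≤ 2 * B2)]
  have e3 : y2 ≤ 2 * B1 := by linarith
  have g4 : (1 : ℝ) ≤ (Bn + 1 - Y) * (4 * B1 * B2) := by
    have e4 : (1 : ℝ) ≤ (Bn + 1 - Y) * y2 * (2 * B2) := by rw [e1]; exact e2
    linarith [e4, mul_nonneg (mul_nonneg ht.le (by linarith : (0:ℝ) ≤ 2 * B2))
      (by linarith : (0:ℝ) ≤ 2 * B1 - y2)]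
  have g3 : X * (Bn + 1 - Y) ≤ (X - Y) * (Bn + 1) := by
    linarith [mul_nonneg (by linarith : (0:ℝ) ≤ Y) (by linarith : (0:ℝ) ≤ X - Bn - 1)]
  have g1 : X * Q1 + Q0 ≤ 2 * X * Q1 := by
    linarith [mul_le_mul_of_nonneg_right hX1.le hQ1n]
  have g2 : Y * Q1 + Q0 ≤ 2 * Q2 := by
    linarith [mul_le_mul_of_nonneg_right hYhigh.le hQ1n,
      mul_le_mul_of_nonneg_right hBng hQ1n]
  have hDy0 : (0:ℝ) < Y * Q1 + Q0 := by
    nlinarith [mul_pos (by linarith : (0:ℝ) < Y) (by linarith : (0:ℝ) < Q1)]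
  have g5 : (Bn + 1) * Q1 ≤ 2 * Q2 := by
    linarith [mul_le_mul_of_nonneg_right hBng hQ1n]
  have c1 : X ≤ (X - Y) * (Bn + 1) * (4 * B1 * B2) := by
    linarith [mul_le_mul_of_nonneg_right g3 h4bb, mul_le_mul_of_nonneg_left g4 hX0.le]
  have hXYnn : (0 : ℝ) ≤ (X - Y) * (4 * B1 * B2) := mul_nonneg (by linarith) h4bb
  have c2 : X * Q1 ≤ (X - Y) * (4 * B1 * B2) * (2 * Q2) := by
    linarith [mul_le_mul_of_nonneg_right c1 hQ1n, mul_le_mul_of_nonneg_left g5 hXYnn]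
  have c3 : (X * Q1 + Q0) * (Y * Q1 + Q0) ≤ (2 * X * Q1) * (2 * Q2) :=
    mul_le_mul g1 g2 hDy0.le
      (mul_nonneg (mul_nonneg (by norm_num) hX0.le) hQ1n)
  calc (X * Q1 + Q0) * (Y * Q1 + Q0) ≤ (2 * X * Q1) * (2 * Q2) := c3
    _ = 4 * Q2 * (X * Q1) := by ring
    _ ≤ 4 * Q2 * ((X - Y) * (4 * B1 * B2) * (2 * Q2)) :=
        mul_le_mul_of_nonneg_left c2 (by linarith)
    _ = (X - Y) * (32 * Q2 ^ 2 * B1 * B2) := by ring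
    _ ≤ (X - Y) * (72 * Q2 ^ 2 * B1 * B2) := by
        have hc : (0:ℝ) ≤ Q2 ^ 2 * B1 * B2 :=
          mul_nonneg (mul_nonneg (sq_nonneg Q2) (by linarith)) (by linarith)
        linarith [mul_le_mul_of_nonneg_left (by linarith : (32:ℝ) ≤ 72)
          (mul_nonneg (by linarith : (0:ℝ) ≤ X - Y) hc)]

set_option maxHeartbeats 1000000 in
theorem stmt4 (α β : ℝ) (hα : α ∈ Set.Ioo (0 : ℝ) 1) (hβ : β ∈ Set.Ioo (0 : ℝ) 1)
    (hirrα : Irrational α) (hirrβ : Irrational β)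
    (a b : ℕ → ℤ) (hcfa : IsCFOf α a) (hcfb : IsCFOf β b)
    (p q : ℕ → ℤ) (h : IsConvergentsOf b p q)
    (n : ℕ) (hn : 1 ≤ n) (hagree : ∀ i, 1 ≤ i → i ≤ n - 1 → a i = b i)
    (hne : a n ≠ b n) :
    1 / (72 * (q (n + 1) : ℝ) ^ 2 * (b (n + 1) : ℝ) * (b (n + 2) : ℝ)) ≤ |α - β| ∧
    1 / (72 * (q (n + 1) : ℝ) * (q (n + 3) : ℝ)) ≤
      1 / (72 * (q (n + 1) : ℝ) ^ 2 * (b (n + 1) : ℝ) * (b (n + 2) : ℝ)) := by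
  obtain ⟨m, rfl⟩ : ∃ m, n = m + 1 := ⟨n - 1, (Nat.succ_pred_eq_of_pos hn).symm⟩
  obtain ⟨x, hx0, hxfl, hxir, hx1, hxrel⟩ := cf_basics α a hcfa hirrα
  obtain ⟨y, hy0, hyfl, hyir, hy1, hyrel⟩ := cf_basics β b hcfb hirrβ
  obtain ⟨hp0, hp1, hprec, hq0, hq1, hqrec⟩ := h
  -- a 0 = 0, b 0 = 0
  have ha0 : a 0 = 0 := by
    rw [hxfl 0, hx0, Int.floor_eq_zero_iff]
    exact ⟨le_of_lt hα.1, hα.2⟩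
  have hb0 : b 0 = 0 := by
    rw [hyfl 0, hy0, Int.floor_eq_zero_iff]
    exact ⟨le_of_lt hβ.1, hβ.2⟩
  -- partial quotients ≥ 1
  have ha1 : ∀ k, 1 ≤ a (k + 1) := by
    intro k; rw [hxfl (k + 1)]
    exact Int.le_floor.mpr (by exact_mod_cast (hx1 k).le)
  have hb1 : ∀ k, 1 ≤ b (k + 1) := by
    intro k; rw [hyfl (k + 1)]
    exact Int.le_floor.mpr (by exact_mod_cast (hy1 k).le)
  -- agreement including index 0
  have hab : ∀ i, i ≤ m → a i = b i := by
    intro i hi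
    rcases Nat.eq_zero_or_pos i with h0 | h0
    · rw [h0, ha0, hb0]
    · exact hagree i h0 (by omega)
  -- q facts
  have hqfacts : ∀ k, 0 ≤ q k ∧ q k ≤ q (k + 1) ∧ 1 ≤ q (k + 1) := by
    intro k
    induction k with
    | zero => rw [hq0, hq1]; omega
    | succ k ih =>
      have hr := hqrec k
      have hb := hb1 k
      refine ⟨by omega, ?_, ?_⟩ <;> nlinarith [ih.1, ih.2.1, ih.2.2]
  -- determinant
  have hdet : ∀ k, p (k + 1) * q k - p k * q (k + 1) = (-1) ^ (k + 1) := by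
    intro k
    induction k with
    | zero => rw [hp1, hb0, hq0, hp0, hq1]; ring
    | succ k ih =>
      rw [hprec k, hqrec k, pow_succ]
      linear_combination (-1 : ℤ) * ih
  -- identity for β
  have Iβ : ∀ k, β * (y (k + 1) * (q (k + 1) : ℝ) + (q k : ℝ)) =
      y (k + 1) * (p (k + 1) : ℝ) + (p k : ℝ) := by
    intro k
    induction k with
    | zero =>
      have h0 := hyrel 0
      rw [hy0, hb0] at h0
      rw [hq1, hq0, hp1, hb0, hp0]
      push_cast
      linear_combination h0
    | succ k ih =>
      have hkey := hyrel (k + 1)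
      have hqr : ((q (k + 2) : ℝ)) = (b (k + 1) : ℝ) * (q (k + 1) : ℝ) + (q k : ℝ) := by
        exact_mod_cast congrArg (Int.cast : ℤ → ℝ) (hqrec k)
      have hpr : ((p (k + 2) : ℝ)) = (b (k + 1) : ℝ) * (p (k + 1) : ℝ) + (p k : ℝ) := by
        exact_mod_cast congrArg (Int.cast : ℤ → ℝ) (hprec k)
      rw [hqr, hpr]
      linear_combination y (k + 2) * ih + ((p (k + 1) : ℝ) - β * (q (k + 1) : ℝ)) * hkey
  -- identity for α (while quotients agree)
  have Iα : ∀ k, k ≤ m → α * (x (k + 1) * (q (k + 1) : ℝ) + (q k : ℝ)) =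
      x (k + 1) * (p (k + 1) : ℝ) + (p k : ℝ) := by
    intro k
    induction k with
    | zero =>
      intro _
      have h0 := hxrel 0
      rw [hx0, ha0] at h0
      rw [hq1, hq0, hp1, hb0, hp0]
      push_cast
      linear_combination h0
    | succ k ih =>
      intro hk
      have ihh := ih (by omega)
      have hkey := hxrel (k + 1)
      have hqr : ((q (k + 2) : ℝ)) = (a (k + 1) : ℝ) * (q (k + 1) : ℝ) + (q k : ℝ) := by
        rw [hab (k + 1) hk]
        exact_mod_cast congrArg (Int.cast : ℤ → ℝ) (hqrec k)
      have hpr : ((p (k + 2) : ℝ)) = (a (k + 1) : ℝ) * (p (k + 1) : ℝ) + (p k : ℝ) := by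
        rw [hab (k + 1) hk]
        exact_mod_cast congrArg (Int.cast : ℤ → ℝ) (hprec k)
      rw [show k + 1 + 1 = k + 2 from rfl, hqr, hpr]
      linear_combination x (k + 2) * ihh + ((p (k + 1) : ℝ) - α * (q (k + 1) : ℝ)) * hkey
  -- normalize indices in the goal
  simp only [show m + 1 + 1 = m + 2 from rfl, show m + 1 + 2 = m + 3 from rfl,
    show m + 1 + 3 = m + 4 from rfl]
  -- basic real bounds
  have hQ0n : (0 : ℝ) ≤ (q m : ℝ) := by exact_mod_cast (hqfacts m).1
  have hQ1g : (1 : ℝ) ≤ (q (m + 1) : ℝ) := by exact_mod_cast (hqfacts m).2.2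
  have hQ01 : (q m : ℝ) ≤ (q (m + 1) : ℝ) := by exact_mod_cast (hqfacts m).2.1
  have hQ12 : (q (m + 1) : ℝ) ≤ (q (m + 2) : ℝ) := by exact_mod_cast (hqfacts (m + 1)).2.1
  have hQ2g : (1 : ℝ) ≤ (q (m + 2) : ℝ) := by exact_mod_cast (hqfacts (m + 1)).2.2
  have hQ2rec : (q (m + 2) : ℝ) = (b (m + 1) : ℝ) * (q (m + 1) : ℝ) + (q m : ℝ) := by
    exact_mod_cast congrArg (Int.cast : ℤ → ℝ) (hqrec m)
  have hBng : (1 : ℝ) ≤ (b (m + 1) : ℝ) := by exact_mod_cast hb1 m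
  have hB1g : (1 : ℝ) ≤ (b (m + 2) : ℝ) := by exact_mod_cast hb1 (m + 1)
  have hB2g : (1 : ℝ) ≤ (b (m + 3) : ℝ) := by exact_mod_cast hb1 (m + 2)
  have hq3c : (q (m + 3) : ℝ) = (b (m + 2) : ℝ) * (q (m + 2) : ℝ) + (q (m + 1) : ℝ) := by
    exact_mod_cast congrArg (Int.cast : ℤ → ℝ) (hqrec (m + 1))
  have hq4c : (q (m + 4) : ℝ) = (b (m + 3) : ℝ) * (q (m + 3) : ℝ) + (q (m + 2) : ℝ) := by
    exact_mod_cast congrArg (Int.cast : ℤ → ℝ) (hqrec (m + 2))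
  have hdetR : (p (m + 1) : ℝ) * (q m : ℝ) - (p m : ℝ) * (q (m + 1) : ℝ) = (-1 : ℝ) ^ (m + 1) := by
    exact_mod_cast congrArg (Int.cast : ℤ → ℝ) (hdet m)
  -- notation
  set X : ℝ := x (m + 1) with hXdef
  set Y : ℝ := y (m + 1) with hYdef
  set Q0 : ℝ := (q m : ℝ) with hQ0def
  set Q1 : ℝ := (q (m + 1) : ℝ) with hQ1def
  set Q2 : ℝ := (q (m + 2) : ℝ) with hQ2def
  set Bn : ℝ := (b (m + 1) : ℝ) with hBndef
  set B1 : ℝ := (b (m + 2) : ℝ) with hB1def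
  set B2 : ℝ := (b (m + 3) : ℝ) with hB2def
  set An : ℝ := (a (m + 1) : ℝ) with hAndef
  have hX1 : (1 : ℝ) < X := hx1 m
  have hY1 : (1 : ℝ) < Y := hy1 m
  -- floor bounds
  have hXlow : An < X := by
    have h1 : (An : ℝ) ≤ X := by
      rw [hAndef, hxfl (m + 1)]; exact_mod_cast Int.floor_le X
    exact lt_of_le_of_ne h1 (Ne.symm ((hxir (m + 1)).ne_int (a (m + 1))))
  have hXhigh : X < An + 1 := by
    have h1 := Int.lt_floor_add_one X
    rw [hAndef, hxfl (m + 1)]; exact_mod_cast h1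
  have hYlow : Bn < Y := by
    have h1 : (Bn : ℝ) ≤ Y := by
      rw [hBndef, hyfl (m + 1)]; exact_mod_cast Int.floor_le Y
    exact lt_of_le_of_ne h1 (Ne.symm ((hyir (m + 1)).ne_int (b (m + 1))))
  have hYhigh : Y < Bn + 1 := by
    have h1 := Int.lt_floor_add_one Y
    rw [hBndef, hyfl (m + 1)]; exact_mod_cast h1
  have hy2high : y (m + 2) < B1 + 1 := by
    have h1 := Int.lt_floor_add_one (y (m + 2))
    rw [hB1def, hyfl (m + 2)]; exact_mod_cast h1
  have hy3high : y (m + 3) < B2 + 1 := by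
    have h1 := Int.lt_floor_add_one (y (m + 3))
    rw [hB2def, hyfl (m + 3)]; exact_mod_cast h1
  have hy2pos : (1 : ℝ) < y (m + 2) := hy1 (m + 1)
  have hy3pos : (1 : ℝ) < y (m + 3) := hy1 (m + 2)
  have hyr1 : y (m + 2) * (Y - Bn) = 1 := hyrel (m + 1)
  have hyr2 : y (m + 3) * (y (m + 2) - B1) = 1 := hyrel (m + 2)
  -- denominators
  set Dx : ℝ := X * Q1 + Q0 with hDxdef
  set Dy : ℝ := Y * Q1 + Q0 with hDydef
  have hDx : (0 : ℝ) < Dx := by nlinarith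
  have hDy : (0 : ℝ) < Dy := by nlinarith
  have IA : α * Dx = X * (p (m + 1) : ℝ) + (p m : ℝ) := Iα m le_rfl
  have IB : β * Dy = Y * (p (m + 1) : ℝ) + (p m : ℝ) := Iβ m
  have hdiff : (α - β) * (Dx * Dy) = (X - Y) * (-1 : ℝ) ^ (m + 1) := by
    linear_combination Dy * IA - Dx * IB + (X - Y) * hdetR
  have habs : |α - β| * (Dx * Dy) = |X - Y| := by
    have h1 : |(α - β) * (Dx * Dy)| = |X - Y| := by
      rw [hdiff, abs_mul, abs_pow, abs_neg, abs_one, one_pow, mul_one]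
    rwa [abs_mul, abs_of_pos (mul_pos hDx hDy)] at h1
  have hQ2pos : (0 : ℝ) < Q2 := by linarith
  have hCpos : (0 : ℝ) < 72 * Q2 ^ 2 * B1 * B2 :=
    mul_pos (mul_pos (mul_pos (by norm_num) (pow_pos hQ2pos 2)) (by linarith)) (by linarith)
  have part2 : 1 / (72 * Q2 * (q (m + 4) : ℝ)) ≤ 1 / (72 * Q2 ^ 2 * B1 * B2) := by
    apply one_div_le_one_div_of_le hCpos
    exact arith_p2 Q1 Q2 B1 B2 _ _ (by linarith) hQ2g hB1g hB2g hq3c hq4c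
  refine ⟨?_, part2⟩
  rw [div_le_iff₀ hCpos]
  suffices key : Dx * Dy ≤ |X - Y| * (72 * Q2 ^ 2 * B1 * B2) by
    rw [← habs] at key
    exact arith_red (Dx * Dy) |α - β| _ (mul_pos hDx hDy) key
  rcases lt_trichotomy (a (m + 1)) (b (m + 1)) with hlt | heq | hgt
  · have hab1 : An + 1 ≤ Bn := by
      rw [hAndef, hBndef]
      exact_mod_cast Int.add_one_le_iff.mpr hlt
    rw [abs_sub_comm, abs_of_pos (show (0:ℝ) < Y - X by linarith)]
    exact arith_lt X Y Q0 Q1 Q2 Bn B1 B2 An (y (m + 2)) hQ0n hQ1g hQ01 hQ12 hQ2rec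
      hBng hB1g hB2g hX1 hXhigh hab1 hYlow hYhigh hy2high hy2pos hyr1
  · exact absurd heq hne
  · have hba1 : Bn + 1 ≤ An := by
      rw [hAndef, hBndef]
      exact_mod_cast Int.add_one_le_iff.mpr hgt
    rw [abs_of_pos (show (0:ℝ) < X - Y by linarith)]
    exact arith_gt X Y Q0 Q1 Q2 Bn B1 B2 An (y (m + 2)) (y (m + 3)) hQ0n hQ1g hQ01 hQ12
      hQ2rec hBng hB1g hB2g hX1 hXlow hba1 hYlow hYhigh hY1 hy2high hy2pos hyr1
      hy3high hy3pos hyr2
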